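/- Theorem 3.1: Let G be a symmetric 2×2 real matrix and F = J · G the matrix of the associated operator. If (tr F)² > 4·det F, then there exist an invertible 2×2 real matrix S and real numbers a, b with b ≠ −a such that Sᵀ · J · S = J and Sᵀ · G · S = diag(a, b); i.e., the two metrics are given by the matrices diag(1, −1) and diag(a, b) with a + b ≠ 0 in a basis composed of eigenvectors of the associated operator. -/

import Mathlib

open Matrix

/-- The Minkowski metric matrix `diag(1, -1)`. -/
def Jmat : Matrix (Fin 2) (Fin 2) ℝ := !![1, 0; 0, -1]

set_option maxHeartbeats 1000000 in
/-- Theorem 3.1: if `(tr F)² > 4 det F` for the associated operator `F = J * G`, then in a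
basis composed of eigenvectors of `F` the metrics are given by `diag(1,-1)` and `diag(a,b)`
with `a + b ≠ 0`. -/
theorem canonical_form_real_distinct_eigenvalues (G : Matrix (Fin 2) (Fin 2) ℝ) (hG : Gᵀ = G)
    (F : Matrix (Fin 2) (Fin 2) ℝ) (hF : F = Jmat * G)
    (h : F.trace ^ 2 > 4 * F.det) :
    ∃ S : Matrix (Fin 2) (Fin 2) ℝ, ∃ a b : ℝ, IsUnit S ∧ b ≠ -a ∧
      Sᵀ * Jmat * S = Jmat ∧ Sᵀ * G * S = !![a, 0; 0, b] ∧
      ∃ l₀ l₁ : ℝ, F.mulVec (fun i => S i 0) = l₀ • (fun i => S i 0) ∧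
        F.mulVec (fun i => S i 1) = l₁ • (fun i => S i 1) := by
  obtain ⟨p, hp⟩ : ∃ x : ℝ, x = G 0 0 := ⟨_, rfl⟩
  obtain ⟨q, hq⟩ : ∃ x : ℝ, x = G 0 1 := ⟨_, rfl⟩
  obtain ⟨r, hr⟩ : ∃ x : ℝ, x = G 1 1 := ⟨_, rfl⟩
  have hsym : G 1 0 = q := by
    conv_lhs => rw [← hG]
    rw [hq]
    rfl
  have hGe : G = !![p, q; q, r] := by
    ext i j
    fin_cases i <;> fin_cases j <;> simp [hsym, ← hp, ← hq, ← hr]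
  have hFe : F = !![p, q; -q, -r] := by
    rw [hF, hGe]
    ext i j
    fin_cases i <;> fin_cases j <;>
      simp [Jmat, Matrix.mul_apply, Fin.sum_univ_two]
  have hu : (p + r) ^ 2 > (2 * q) ^ 2 := by
    rw [hFe] at h
    simp [Matrix.trace_fin_two, Matrix.det_fin_two] at h
    nlinarith [h]
  obtain ⟨ε, hεdef⟩ : ∃ x : ℝ, x = if 0 ≤ p + r then 1 else -1 := ⟨_, rfl⟩
  have hε2 : ε ^ 2 = 1 := by
    rw [hεdef]; split <;> norm_num
  have hune : p + r ≠ 0 := by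
    intro h0
    rw [h0] at hu
    nlinarith [sq_nonneg (2 * q)]
  have hepos : 0 < ε * (p + r) := by
    rw [hεdef]
    rcases lt_or_ge (p + r) 0 with h1 | h1
    · rw [if_neg (not_le.mpr h1)]; nlinarith
    · rw [if_pos h1]
      rcases h1.lt_or_eq with h2 | h2
      · nlinarith
      · exact absurd h2.symm hune
  obtain ⟨w, hwdef⟩ : ∃ x : ℝ, x = Real.sqrt ((p + r) ^ 2 - (2 * q) ^ 2) := ⟨_, rfl⟩
  have hwpos : 0 < w := hwdef ▸ Real.sqrt_pos.mpr (by nlinarith)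
  have hw2 : w ^ 2 = (p + r) ^ 2 - (2 * q) ^ 2 := hwdef ▸ Real.sq_sqrt (by nlinarith)
  have he2 : (ε * (p + r)) ^ 2 = (p + r) ^ 2 := by nlinarith [hε2]
  have hwe : w ≤ ε * (p + r) := by
    nlinarith [sq_nonneg (ε * (p + r) - w), sq_nonneg (ε * (p + r) + w)]
  obtain ⟨c, hcdef⟩ : ∃ x : ℝ, x = Real.sqrt ((ε * (p + r) + w) / (2 * w)) := ⟨_, rfl⟩
  have hcarg : 0 < (ε * (p + r) + w) / (2 * w) := by positivity
  have hcpos : 0 < c := hcdef ▸ Real.sqrt_pos.mpr hcarg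
  have hc2 : c ^ 2 = (ε * (p + r) + w) / (2 * w) := hcdef ▸ Real.sq_sqrt hcarg.le
  obtain ⟨s, hsdef⟩ : ∃ x : ℝ, x = -ε * (2 * q) / (2 * c * w) := ⟨_, rfl⟩
  have hcs : c * s = -(ε * q) / w := by
    rw [hsdef]
    field_simp
  have hs2 : s ^ 2 = (ε * (p + r) - w) / (2 * w) := by
    have h4 : c ^ 2 * (2 * w) = ε * (p + r) + w := by
      rw [hc2]; field_simp
    rw [hsdef, div_pow, div_eq_div_iff (by positivity) (by positivity)]
    linear_combination 2 * w * (2 * q) ^ 2 * hε2 - 2 * w * (ε * (p + r) - w) * h4 -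
      2 * w * he2 + 2 * w * hw2
  have hk1 : c ^ 2 - s ^ 2 = 1 := by
    rw [hc2, hs2]
    field_simp
    ring
  have hcs2 : c ^ 2 + s ^ 2 = ε * (p + r) / w := by
    rw [hc2, hs2]
    field_simp
    ring
  have hk2 : c * s * (p + r) + q * (c ^ 2 + s ^ 2) = 0 := by
    rw [hcs, hcs2]
    field_simp
    ring
  have hST : (!![c, s; s, c] : Matrix (Fin 2) (Fin 2) ℝ)ᵀ = !![c, s; s, c] := by
    ext i j
    fin_cases i <;> fin_cases j <;> rfl
  refine ⟨!![c, s; s, c], c ^ 2 * p + 2 * (c * s) * q + s ^ 2 * r,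
    s ^ 2 * p + 2 * (c * s) * q + c ^ 2 * r, ?_, ?_, ?_, ?_, ?_⟩
  · rw [Matrix.isUnit_iff_isUnit_det]
    have hdet : (!![c, s; s, c] : Matrix (Fin 2) (Fin 2) ℝ).det = 1 := by
      rw [Matrix.det_fin_two_of]
      linear_combination hk1
    rw [hdet]
    exact isUnit_one
  · -- b ≠ -a
    have hab : (c ^ 2 * p + 2 * (c * s) * q + s ^ 2 * r) +
        (s ^ 2 * p + 2 * (c * s) * q + c ^ 2 * r) = ε * w := by
      have h1 : (c ^ 2 * p + 2 * (c * s) * q + s ^ 2 * r) +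
          (s ^ 2 * p + 2 * (c * s) * q + c ^ 2 * r)
          = (c ^ 2 + s ^ 2) * (p + r) + (c * s) * (4 * q) := by
        ring
      rw [h1, hcs2, hcs]
      field_simp
      linear_combination -ε * hw2
    intro hcon
    rw [hcon] at hab
    have hzero : ε * w = 0 := by linarith
    rcases mul_eq_zero.mp hzero with h1 | h1
    · rw [hεdef] at h1; revert h1; split <;> norm_num
    · exact absurd h1 (ne_of_gt hwpos)
  · rw [hST]
    ext i j
    fin_cases i <;> fin_cases j <;>
      simp [Jmat, Matrix.mul_apply, Fin.sum_univ_two] <;>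
      first
        | linear_combination hk1
        | linear_combination -hk1
        | ring
  · rw [hST, hGe]
    ext i j
    fin_cases i <;> fin_cases j <;>
      simp [Matrix.mul_apply, Fin.sum_univ_two]
    · ring
    · linear_combination hk2
    · linear_combination hk2
    · ring
  · refine ⟨c ^ 2 * p + 2 * (c * s) * q + s ^ 2 * r,
      -(s ^ 2 * p + 2 * (c * s) * q + c ^ 2 * r), ?_, ?_⟩
    · funext i
      rw [hFe]
      fin_cases i
      · simp [Matrix.mulVec, dotProduct, Fin.sum_univ_two]
        linear_combination -s * hk2 - (p * c + q * s) * hk1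
      · simp [Matrix.mulVec, dotProduct, Fin.sum_univ_two]
        linear_combination -c * hk2 + (q * c + r * s) * hk1
    · funext i
      rw [hFe]
      fin_cases i
      · simp [Matrix.mulVec, dotProduct, Fin.sum_univ_two]
        linear_combination c * hk2 - (p * s + q * c) * hk1
      · simp [Matrix.mulVec, dotProduct, Fin.sum_univ_two]
        linear_combination s * hk2 + (q * s + r * c) * hk1
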